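/- Let X be a compact Hausdorff space with a continuous action of a finitely generated semigroup S, and let Σ ⊆ S be a finite generating set. Then (X,S) has the pseudo-orbit tracing property if and only if for every entourage U of X there exists an entourage V of X such that every (Σ,V)-pseudo-orbit in X is U-traced by the orbit of some point of X. -/

import Mathlib

/-- Key lemma: for every `k : S` and entourage `W`, there is an entourage `V'` such that any
`(Sig, V')`-pseudo-orbit satisfies the `k`-step condition with respect to `W`. -/
theorem key_step {S X : Type*} [Semigroup S] [UniformSpace X] [CompactSpace X]
    [SMul S X] [IsScalarTower S S X]
    (hcont : ∀ s : S, Continuous fun x : X => s • x)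
    (Sig : Finset S) (hgen : Subsemigroup.closure (Sig : Set S) = ⊤) (k : S) :
    ∀ W ∈ uniformity X, ∃ V ∈ uniformity X,
      ∀ xs : S → X, (∀ σ ∈ Sig, ∀ s : S, (σ • xs s, xs (σ * s)) ∈ V) →
        ∀ s : S, (k • xs s, xs (k * s)) ∈ W := by
  have hk : k ∈ Subsemigroup.closure (Sig : Set S) := hgen ▸ Subsemigroup.mem_top k
  induction hk using Subsemigroup.closure_induction with
  | mem σ hσ =>
    intro W hW
    exact ⟨W, hW, fun xs hxs s => hxs σ hσ s⟩
  | mul a b ha hb iha ihb =>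
    intro W hW
    obtain ⟨W', hW', hW'comp⟩ := comp_mem_uniformity_sets hW
    -- uniform continuity of `a • ·`
    have huc : UniformContinuous fun x : X => a • x :=
      CompactSpace.uniformContinuous_of_continuous (hcont a)
    have hW'' : {p : X × X | (a • p.1, a • p.2) ∈ W'} ∈ uniformity X := huc hW'
    obtain ⟨Vb, hVb, hVbspec⟩ := ihb _ hW''
    obtain ⟨Va, hVa, hVaspec⟩ := iha W' hW'
    refine ⟨Va ∩ Vb, Filter.inter_mem hVa hVb, fun xs hxs s => ?_⟩
    have hxsa : ∀ σ ∈ Sig, ∀ s : S, (σ • xs s, xs (σ * s)) ∈ Va :=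
      fun σ hσ s => (hxs σ hσ s).1
    have hxsb : ∀ σ ∈ Sig, ∀ s : S, (σ • xs s, xs (σ * s)) ∈ Vb :=
      fun σ hσ s => (hxs σ hσ s).2
    have h1 : (a • (b • xs s), a • xs (b * s)) ∈ W' := hVbspec xs hxsb s
    have h2 : (a • xs (b * s), xs (a * (b * s))) ∈ W' := hVaspec xs hxsa (b * s)
    have h3 : (a • (b • xs s), xs (a * (b * s))) ∈ SetRel.comp W' W' := ⟨_, h1, h2⟩
    have heq : (a * b) • xs s = a • (b • xs s) := by
      rw [← smul_eq_mul, smul_assoc]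
    rw [heq, mul_assoc]
    exact hW'comp h3

/-- For a finitely generated semigroup `S` with finite generating set `Sig`, the
pseudo-orbit tracing property for `(X,S)` is equivalent to the tracing condition for
`(Sig,V)`-pseudo-orbits. -/
theorem stmt_2 {S X : Type*} [Semigroup S] [UniformSpace X] [CompactSpace X] [T2Space X]
    [SMul S X] [IsScalarTower S S X]
    (hcont : ∀ s : S, Continuous fun x : X => s • x)
    (Sig : Finset S) (hgen : Subsemigroup.closure (Sig : Set S) = ⊤) :
    (∀ U ∈ uniformity X, ∃ K : Finset S, ∃ V ∈ uniformity X,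
        ∀ xs : S → X, (∀ k ∈ K, ∀ s : S, (k • xs s, xs (k * s)) ∈ V) →
          ∃ x : X, ∀ s : S, (s • x, xs s) ∈ U)
    ↔ (∀ U ∈ uniformity X, ∃ V ∈ uniformity X,
        ∀ xs : S → X, (∀ σ ∈ Sig, ∀ s : S, (σ • xs s, xs (σ * s)) ∈ V) →
          ∃ x : X, ∀ s : S, (s • x, xs s) ∈ U) := by
  constructor
  · intro h U hU
    obtain ⟨K, V, hV, hspec⟩ := h U hU
    -- For each k ∈ K choose an entourage from the key lemma
    choose Vk hVk hVkspec using fun k : S => key_step hcont Sig hgen k V hV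
    refine ⟨⋂ k ∈ K, Vk k, (Filter.biInter_mem K.finite_toSet).mpr fun k _ => hVk k,
      fun xs hxs => ?_⟩
    refine hspec xs fun k hk s => ?_
    refine hVkspec k xs (fun σ hσ s => ?_) s
    have := hxs σ hσ s
    simpa using Set.mem_iInter₂.mp this k hk
  · intro h U hU
    obtain ⟨V, hV, hspec⟩ := h U hU
    exact ⟨Sig, V, hV, hspec⟩
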